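/- Let x_1,...,x_m, y_1,...,y_m, t be elements of a commutative ring with x_j y_j = t for all j. Let V^m_i be the m×m matrix whose rows are (x_1^r,...,x_m^r) for r = 0,...,m-i followed by (y_1^s,...,y_m^s) for s = 1,...,i-1, and set G_i = det(V^m_i). Then for each i, t^{m-i} · G_{i+1} = ± (y_1⋯y_m) · G_i, i.e., G_{i+1} is obtained from G_i by multiplying by the product of the y_j and dividing by a power of t, up to sign. -/
import Mathlib

/-- The cycle `0 ↦ k`, `r ↦ r-1` for `1 ≤ r ≤ k`, identity above `k`. -/
def cycPerm (m k : ℕ) (hk : k < m) : Equiv.Perm (Fin m) where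
  toFun r := if (r : ℕ) = 0 then ⟨k, hk⟩
    else if (r : ℕ) ≤ k then ⟨(r : ℕ) - 1, lt_of_le_of_lt (Nat.sub_le _ _) r.isLt⟩ else r
  invFun r := if h : (r : ℕ) < k then ⟨(r : ℕ) + 1, Nat.lt_of_le_of_lt h hk⟩
    else if (r : ℕ) = k then ⟨0, Nat.lt_of_le_of_lt (Nat.zero_le k) hk⟩ else r
  left_inv r := by
    rcases r with ⟨v, hv⟩
    apply Fin.ext
    simp only [apply_dite (Fin.val), apply_ite (Fin.val), Fin.val_mk]
    split_ifs <;> first | contradiction | omega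
  right_inv r := by
    rcases r with ⟨v, hv⟩
    apply Fin.ext
    simp only [apply_dite (Fin.val), apply_ite (Fin.val), Fin.val_mk]
    split_ifs <;> first | contradiction | omega

theorem cycPerm_val_zero (m k : ℕ) (hk : k < m) (r : Fin m) (h : (r : ℕ) = 0) :
    ((cycPerm m k hk r : Fin m) : ℕ) = k := by
  simp [cycPerm, Equiv.coe_fn_mk, h]

theorem cycPerm_val_mid (m k : ℕ) (hk : k < m) (r : Fin m) (h0 : 1 ≤ (r : ℕ))
    (h : (r : ℕ) ≤ k) : ((cycPerm m k hk r : Fin m) : ℕ) = (r : ℕ) - 1 := by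
  simp only [cycPerm, Equiv.coe_fn_mk]
  rw [if_neg (by omega), if_pos h]

theorem cycPerm_val_high (m k : ℕ) (hk : k < m) (r : Fin m) (h : k < (r : ℕ)) :
    ((cycPerm m k hk r : Fin m) : ℕ) = (r : ℕ) := by
  simp only [cycPerm, Equiv.coe_fn_mk]
  rw [if_neg (by omega), if_neg (by omega)]

open Finset in
/-- Mixed Van der Monde determinants: with `x_j y_j = t` for all `j`, let `V^m_i` be
the `m×m` matrix with rows `(x_1^r,...,x_m^r)` for `r = 0,...,m-i` followed by
`(y_1^s,...,y_m^s)` for `s = 1,...,i-1`, and `G_i = det V^m_i`. Then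
`t^{m-i} · G_{i+1} = ± (y_1⋯y_m) · G_i`. -/
theorem stmt_6 {R : Type*} [CommRing R] (m : ℕ) (x y : Fin m → R) (t : R)
    (hxy : ∀ j, x j * y j = t) (i : ℕ) (h1 : 1 ≤ i) (h2 : i + 1 ≤ m) :
    let G : ℕ → R := fun i' => Matrix.det (Matrix.of fun (r j : Fin m) =>
      if (r : ℕ) ≤ m - i' then x j ^ (r : ℕ) else y j ^ ((r : ℕ) - (m - i')))
    t ^ (m - i) * G (i + 1) = (∏ j, y j) * G i ∨
      t ^ (m - i) * G (i + 1) = -((∏ j, y j) * G i) := by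
  intro G
  have hk1 : 1 ≤ m - i := by omega
  have hkm : m - i < m := by omega
  have hmi1 : m - (i + 1) = m - i - 1 := by omega
  set k := m - i with hk
  set σ := cycPerm m k hkm with hσ
  set N : Matrix (Fin m) (Fin m) R := Matrix.of fun (r j : Fin m) =>
      if (r : ℕ) ≤ m - (i+1) then x j ^ (r : ℕ) else y j ^ ((r : ℕ) - (m - (i+1))) with hN
  set M : Matrix (Fin m) (Fin m) R := Matrix.of fun (r j : Fin m) =>
      if (r : ℕ) ≤ m - i then x j ^ (r : ℕ) else y j ^ ((r : ℕ) - (m - i)) with hM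
  set w : Fin m → R := fun r => if 1 ≤ (r : ℕ) ∧ (r : ℕ) ≤ k then t else 1 with hw
  have hGi : G i = M.det := rfl
  have hGi1 : G (i + 1) = N.det := rfl
  have key : (∏ j, y j) * G i = t ^ k * (((Equiv.Perm.sign σ : ℤ) : R) * G (i + 1)) := by
    have step1 : (∏ j, y j) * G i =
        Matrix.det (Matrix.of fun (r j : Fin m) => y j * M r j) := by
      rw [hGi]; exact (Matrix.det_mul_row y M).symm
    have hmat : (Matrix.of fun (r j : Fin m) => y j * M r j) =
        Matrix.of fun (r j : Fin m) => w r * (N.submatrix σ id) r j := by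
      ext r j
      simp only [Matrix.of_apply, Matrix.submatrix_apply, id_eq, hM, hN, hw, hσ, ← hk]
      rcases Nat.eq_zero_or_pos (r : ℕ) with h0 | h0
      · rw [if_pos (by omega : (r : ℕ) ≤ k), if_neg (by omega),
          if_neg (by rw [cycPerm_val_zero m k hkm r h0]; omega),
          cycPerm_val_zero m k hkm r h0, h0]
        rw [show k - (m - (i + 1)) = 1 by omega]
        simp
      · rcases le_or_gt (r : ℕ) k with hrk | hrk
        · rw [if_pos hrk, if_pos ⟨h0, hrk⟩,
            if_pos (by rw [cycPerm_val_mid m k hkm r h0 hrk]; omega),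
            cycPerm_val_mid m k hkm r h0 hrk]
          rw [show (r : ℕ) = ((r : ℕ) - 1) + 1 by omega, pow_succ,
            show (r : ℕ) - 1 + 1 - 1 = (r : ℕ) - 1 by omega]
          linear_combination (x j) ^ ((r : ℕ) - 1) * hxy j
        · rw [if_neg (by omega), if_neg (by omega),
            if_neg (by rw [cycPerm_val_high m k hkm r hrk]; omega),
            cycPerm_val_high m k hkm r hrk]
          rw [show (r : ℕ) - (m - (i + 1)) = ((r : ℕ) - k) + 1 by omega, pow_succ]
          ring
    have step2 : Matrix.det (Matrix.of fun (r j : Fin m) => w r * (N.submatrix σ id) r j) =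
        (∏ r, w r) * Matrix.det (N.submatrix σ id) := Matrix.det_mul_column w _
    have step3 : Matrix.det (N.submatrix σ id) =
        ((Equiv.Perm.sign σ : ℤ) : R) * N.det := by
      rw [Matrix.det_permute σ N]
    have hprod : (∏ r, w r) = t ^ k := by
      have e0 : (∏ r, w r) = ∏ v ∈ Finset.range m, (if 1 ≤ v ∧ v ≤ k then t else 1) :=
        Fin.prod_univ_eq_prod_range (fun v => if 1 ≤ v ∧ v ≤ k then t else 1) m
      rw [e0, Finset.prod_ite, Finset.prod_const, Finset.prod_const_one, mul_one]
      rw [show ((Finset.range m).filter fun v => 1 ≤ v ∧ v ≤ k) = Finset.Ioc 0 k by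
        ext v; simp; omega, Nat.card_Ioc, Nat.sub_zero]
    rw [step1, hmat, step2, step3, hprod, hGi1]
  rcases Int.units_eq_one_or (Equiv.Perm.sign σ) with hs | hs
  · left
    rw [hs] at key
    push_cast at key
    rw [key]; ring
  · right
    rw [hs] at key
    push_cast at key
    rw [key]; ring
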